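/- arXiv:2006.03118 — 3 statements merged into one kernel-verified Lean document; each statement's English description precedes it below -/
import Mathlib

section
/- Let Γ ⊂ ℝⁿ be d-Ahlfors regular with d < n−1 and complement Ω = ℝⁿ \ Γ. There exists C depending only on C_σ, n, d such that for every x ∈ Γ and r > 0 there is a corkscrew point A ∈ Ω with C⁻¹ r ≤ dist(A,Γ) ≤ |A − x| ≤ C r. -/
open MeasureTheory Metric Set

noncomputable section

/-- `σ` is `d`-Ahlfors regular on `Γ` with constant `C`. -/
def AhlforsRegular {E : Type*} [NormedAddCommGroup E] [MeasurableSpace E]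
    (σ : Measure E) (Γ : Set E) (d : ℝ) (C : ℝ) : Prop :=
  ∀ x ∈ Γ, ∀ r > 0, ENNReal.ofReal (C⁻¹ * r ^ d) ≤ σ (ball x r) ∧
    σ (ball x r) ≤ ENNReal.ofReal (C * r ^ d)

/-- A `d`-Ahlfors regular set `Γ ⊂ ℝⁿ` with `d < n − 1` satisfies the
corkscrew condition: there is `C > 0` (depending only on `C_σ`, `n`, `d`) so that for
every `x ∈ Γ` and `r > 0` there is a corkscrew point `A ∈ Ω = ℝⁿ \ Γ` with
`C⁻¹ r ≤ dist(A,Γ) ≤ |A − x| ≤ C r`. -/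
theorem stmt2 (n : ℕ) (d : ℝ) (hd : 0 < d) (hdn : d < (n : ℝ) - 1)
    (Γ : Set (EuclideanSpace ℝ (Fin n))) (hΓ : IsClosed Γ)
    (σ : Measure (EuclideanSpace ℝ (Fin n))) (hsupp : σ.restrict Γ = σ)
    (Cσ : ℝ) (hCσ : 1 ≤ Cσ) (hAR : AhlforsRegular σ Γ d Cσ) :
    ∃ C > 0, ∀ x ∈ Γ, ∀ r > 0, ∃ A ∉ Γ,
      C⁻¹ * r ≤ infDist A Γ ∧ infDist A Γ ≤ ‖A - x‖ ∧ ‖A - x‖ ≤ C * r := by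
  classical
  have hn : 0 < n := by
    have h0 : (0:ℝ) < (n:ℝ) := by linarith
    exact_mod_cast h0
  haveI : Nonempty (Fin n) := ⟨⟨0, hn⟩⟩
  -- the basic constant
  have h5d : (1 : ℝ) ≤ (5 : ℝ) ^ d := by
    rw [show (1:ℝ) = (1:ℝ) ^ d from (Real.one_rpow d).symm]
    exact Real.rpow_le_rpow (by norm_num) (by norm_num) hd.le
  set K0 : ℝ := Cσ ^ 2 * (5 : ℝ) ^ d * 9 ^ n with hK0def
  have hK0 : 1 ≤ K0 := by
    have h9 : (1:ℝ) ≤ 9 ^ n := one_le_pow₀ (by norm_num)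
    have hC2 : (1:ℝ) ≤ Cσ ^ 2 := one_le_pow₀ hCσ
    calc (1:ℝ) = 1 * 1 * 1 := by ring
    _ ≤ Cσ ^ 2 * (5:ℝ) ^ d * 9 ^ n := by
        apply mul_le_mul (mul_le_mul hC2 h5d (by norm_num) (by positivity)) h9 (by norm_num)
        positivity
  set M : ℝ := K0 + 1 with hMdef
  have hM1 : (1 : ℝ) < M := by linarith
  have hM0 : (0 : ℝ) < M := by linarith
  -- the key claim: a point of `ball x r` at distance ≥ r / M from Γ
  have key : ∀ x ∈ Γ, ∀ r > 0, ∃ A, dist A x < r ∧ r / M ≤ infDist A Γ := by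
    intro x hx r hr
    by_contra hcon
    push_neg at hcon
    set δ : ℝ := r / M with hδdef
    have hδ : 0 < δ := div_pos hr hM0
    have hδr : δ ≤ r := by
      rw [hδdef, div_le_iff₀ hM0]
      nlinarith
    -- compact piece of Γ
    have hKcomp : IsCompact (Γ ∩ closedBall x (2 * r)) :=
      (isCompact_closedBall x (2 * r)).inter_left hΓ
    obtain ⟨t, htK, htfin, htcov⟩ := hKcomp.finite_cover_balls hδ
    have htΓ : t ⊆ Γ := htK.trans (inter_subset_left)
    -- every point of `ball x r` is within 2δ of some point of t
    have hnear : ∀ A ∈ ball x r, ∃ z ∈ t, dist A z < 2 * δ := by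
      intro A hA
      have hlt : infDist A Γ < δ := hcon A (mem_ball.1 hA)
      obtain ⟨y, hyΓ, hy⟩ := (infDist_lt_iff ⟨x, hx⟩).1 hlt
      have hyK : y ∈ Γ ∩ closedBall x (2 * r) := by
        refine ⟨hyΓ, mem_closedBall.2 ?_⟩
        have : dist y x ≤ dist y A + dist A x := dist_triangle y A x
        have hAx : dist A x < r := mem_ball.1 hA
        rw [dist_comm y A] at this
        linarith
      obtain ⟨z, hz⟩ := mem_iUnion₂.1 (htcov hyK)
      refine ⟨z, hz.1, ?_⟩
      have hyz : dist y z < δ := mem_ball.1 hz.2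
      calc dist A z ≤ dist A y + dist y z := dist_triangle A y z
      _ < δ + δ := by linarith
      _ = 2 * δ := by ring
    -- Vitali subfamily
    obtain ⟨u, hut, hdisj, henl⟩ :=
      Vitali.exists_disjoint_subfamily_covering_enlargement_closedBall t
        (fun z => z) (fun _ => 2 * δ) (2 * δ) (fun _ _ => le_rfl) 4 (by norm_num)
    have hufin : u.Finite := htfin.subset hut
    set F : Finset (EuclideanSpace ℝ (Fin n)) := hufin.toFinset with hFdef
    have hFu : (F : Set (EuclideanSpace ℝ (Fin n))) = u := hufin.coe_toFinset
    have hFΓ : ∀ b ∈ F, b ∈ Γ := by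
      intro b hb
      exact htΓ (hut (hufin.mem_toFinset.1 hb))
    have hFK : ∀ b ∈ F, dist b x ≤ 2 * r := by
      intro b hb
      exact mem_closedBall.1 (htK (hut (hufin.mem_toFinset.1 hb))).2
    -- counting: lower bound for each ball, upper via σ of a big ball
    have hlow : ∀ b ∈ F, ENNReal.ofReal (Cσ⁻¹ * δ ^ d) ≤ σ (closedBall b (2 * δ)) := by
      intro b hb
      have h1 := (hAR b (hFΓ b hb) (2 * δ) (by linarith)).1
      refine le_trans ?_ (le_trans h1 (measure_mono ball_subset_closedBall))
      apply ENNReal.ofReal_le_ofReal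
      apply mul_le_mul_of_nonneg_left _ (by positivity)
      exact Real.rpow_le_rpow hδ.le (by linarith) hd.le
    have hsub : (⋃ b ∈ F, closedBall b (2 * δ)) ⊆ ball x (5 * r) := by
      intro y hy
      obtain ⟨b, hb, hyb⟩ := mem_iUnion₂.1 hy
      have h1 : dist y b ≤ 2 * δ := mem_closedBall.1 hyb
      have h2 : dist b x ≤ 2 * r := hFK b hb
      have : dist y x ≤ dist y b + dist b x := dist_triangle y b x
      refine mem_ball.2 (by linarith)
    have hdisjF : (F : Set (EuclideanSpace ℝ (Fin n))).PairwiseDisjoint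
        (fun b => closedBall b (2 * δ)) := by
      rw [hFu]; exact hdisj
    have hcount : (F.card : ENNReal) * ENNReal.ofReal (Cσ⁻¹ * δ ^ d)
        ≤ ENNReal.ofReal (Cσ * (5 * r) ^ d) := by
      calc (F.card : ENNReal) * ENNReal.ofReal (Cσ⁻¹ * δ ^ d)
          = F.card • ENNReal.ofReal (Cσ⁻¹ * δ ^ d) := (nsmul_eq_mul _ _).symm
      _ ≤ ∑ b ∈ F, σ (closedBall b (2 * δ)) := Finset.card_nsmul_le_sum F _ _ hlow
      _ = σ (⋃ b ∈ F, closedBall b (2 * δ)) :=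
          (measure_biUnion_finset hdisjF (fun b _ => measurableSet_closedBall)).symm
      _ ≤ σ (ball x (5 * r)) := measure_mono hsub
      _ ≤ ENNReal.ofReal (Cσ * (5 * r) ^ d) := (hAR x hx (5 * r) (by linarith)).2
    -- volume cover
    have hcover : ball x r ⊆ ⋃ b ∈ F, ball b (9 * δ) := by
      intro A hA
      obtain ⟨z, hzt, hz⟩ := hnear A hA
      obtain ⟨b, hbu, hball⟩ := henl z hzt
      have hAz : A ∈ closedBall z (2 * δ) := mem_closedBall.2 hz.le
      have hAb : dist A b ≤ 4 * (2 * δ) := mem_closedBall.1 (hball hAz)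
      refine mem_iUnion₂.2 ⟨b, hufin.mem_toFinset.2 hbu, mem_ball.2 (by linarith)⟩
    set c : ENNReal := ENNReal.ofReal (Real.sqrt Real.pi ^ n / Real.Gamma (n / 2 + 1)) with hcdef
    have hcpos : 0 < Real.sqrt Real.pi ^ n / Real.Gamma (n / 2 + 1) := by
      apply div_pos (pow_pos (Real.sqrt_pos.2 Real.pi_pos) n)
      exact Real.Gamma_pos_of_pos (by positivity)
    have hvb : ∀ (z : EuclideanSpace ℝ (Fin n)) (ρ : ℝ),
        volume (ball z ρ) = ENNReal.ofReal ρ ^ n * c := by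
      intro z ρ
      rw [EuclideanSpace.volume_ball (Fin n) z ρ]
      simp [hcdef, Fintype.card_fin]
    have hvol : ENNReal.ofReal r ^ n * c ≤ (F.card : ENNReal) * (ENNReal.ofReal (9 * δ) ^ n * c) := by
      calc ENNReal.ofReal r ^ n * c = volume (ball x r) := (hvb x r).symm
      _ ≤ volume (⋃ b ∈ F, ball b (9 * δ)) := measure_mono hcover
      _ ≤ ∑ b ∈ F, volume (ball b (9 * δ)) := measure_biUnion_finset_le F _
      _ = (F.card : ENNReal) * (ENNReal.ofReal (9 * δ) ^ n * c) := by
          simp only [hvb]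
          rw [Finset.sum_const, nsmul_eq_mul]
    have hcne : c ≠ 0 := by
      simp only [hcdef, ne_eq, ENNReal.ofReal_eq_zero, not_le]
      exact hcpos
    have hcnt : c ≠ ⊤ := ENNReal.ofReal_ne_top
    have hvol2 : ENNReal.ofReal r ^ n ≤ (F.card : ENNReal) * ENNReal.ofReal (9 * δ) ^ n := by
      rw [← mul_assoc] at hvol
      exact (ENNReal.mul_le_mul_iff_left hcne hcnt).1 hvol
    -- move to real numbers
    set N : ℝ := (F.card : ℝ) with hNdef
    have hN0 : 0 ≤ N := Nat.cast_nonneg _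
    have hcount' : N * (Cσ⁻¹ * δ ^ d) ≤ Cσ * (5 * r) ^ d := by
      have h1 : ENNReal.ofReal (N * (Cσ⁻¹ * δ ^ d)) ≤ ENNReal.ofReal (Cσ * (5 * r) ^ d) := by
        rw [ENNReal.ofReal_mul hN0, ENNReal.ofReal_natCast]
        exact hcount
      have hrhs : 0 ≤ Cσ * (5 * r) ^ d := by positivity
      exact (ENNReal.ofReal_le_ofReal_iff hrhs).1 h1
    have hvol' : r ^ n ≤ N * (9 * δ) ^ n := by
      have h1 : ENNReal.ofReal (r ^ n) ≤ ENNReal.ofReal (N * (9 * δ) ^ n) := by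
        rw [ENNReal.ofReal_pow hr.le, ENNReal.ofReal_mul hN0, ENNReal.ofReal_natCast,
          ENNReal.ofReal_pow (by linarith : (0:ℝ) ≤ 9 * δ)]
        exact hvol2
      have hrhs : 0 ≤ N * (9 * δ) ^ n := by positivity
      exact (ENNReal.ofReal_le_ofReal_iff hrhs).1 h1
    -- combine: r^n * δ^d ≤ K0 * δ^n * r^d
    have hNd : N * δ ^ d ≤ Cσ ^ 2 * (5:ℝ) ^ d * r ^ d := by
      have h2 : Cσ * (5 * r) ^ d = Cσ * ((5:ℝ) ^ d * r ^ d) := by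
        rw [Real.mul_rpow (by norm_num) hr.le]
      have h3 : Cσ⁻¹ * (N * δ ^ d) ≤ Cσ⁻¹ * (Cσ * (Cσ * ((5:ℝ)^d * r ^ d))) := by
        rw [← h2]
        have := mul_le_mul_of_nonneg_left hcount' (le_of_lt (by positivity : (0:ℝ) < Cσ))
        calc Cσ⁻¹ * (N * δ ^ d) = Cσ⁻¹ * (Cσ * (Cσ⁻¹ * (N * δ ^ d))) := by
              field_simp
        _ ≤ Cσ⁻¹ * (Cσ * (Cσ * (5 * r) ^ d)) := by
              apply mul_le_mul_of_nonneg_left _ (by positivity)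
              apply mul_le_mul_of_nonneg_left _ (by positivity)
              calc Cσ⁻¹ * (N * δ ^ d) = N * (Cσ⁻¹ * δ ^ d) := by ring
              _ ≤ Cσ * (5 * r) ^ d := hcount'
      have hCpos : (0:ℝ) < Cσ := by linarith
      have h4 : N * δ ^ d ≤ Cσ * (Cσ * ((5:ℝ)^d * r ^ d)) := by
        have := mul_le_mul_of_nonneg_left h3 hCpos.le
        rw [← mul_assoc, mul_inv_cancel₀ hCpos.ne', one_mul, ← mul_assoc,
          mul_inv_cancel₀ hCpos.ne', one_mul] at this
        exact this
      calc N * δ ^ d ≤ Cσ * (Cσ * ((5:ℝ)^d * r ^ d)) := h4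
      _ = Cσ ^ 2 * (5:ℝ) ^ d * r ^ d := by ring
    -- final contradiction
    have hcomb : r ^ n * δ ^ d ≤ K0 * δ ^ n * r ^ d := by
      have hδd : (0:ℝ) ≤ δ ^ d := Real.rpow_nonneg hδ.le d
      calc r ^ n * δ ^ d ≤ (N * (9 * δ) ^ n) * δ ^ d :=
            mul_le_mul_of_nonneg_right hvol' hδd
      _ = (9:ℝ) ^ n * δ ^ n * (N * δ ^ d) := by rw [mul_pow]; ring
      _ ≤ (9:ℝ) ^ n * δ ^ n * (Cσ ^ 2 * (5:ℝ) ^ d * r ^ d) := by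
            apply mul_le_mul_of_nonneg_left hNd (by positivity)
      _ = K0 * δ ^ n * r ^ d := by rw [hK0def]; ring
    -- substitute δ = r / M and derive M^(n-d) ≤ K0
    have hδn : δ ^ n = r ^ n / M ^ n := div_pow r M n
    have hδdpow : δ ^ d = r ^ d / M ^ d := Real.div_rpow hr.le hM0.le d
    have hrd : (0:ℝ) < r ^ d := Real.rpow_pos_of_pos hr d
    have hrn : (0:ℝ) < r ^ n := pow_pos hr n
    have hMd : (0:ℝ) < M ^ d := Real.rpow_pos_of_pos hM0 d
    have hMn : (0:ℝ) < M ^ n := pow_pos hM0 n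
    rw [hδn, hδdpow] at hcomb
    -- hcomb : r^n * (r^d / M^d) ≤ K0 * (r^n / M^n) * r^d
    have hMle : M ^ n ≤ K0 * M ^ d := by
      have h1 : r ^ n * r ^ d * M ^ n ≤ K0 * r ^ n * r ^ d * M ^ d := by
        have := mul_le_mul_of_nonneg_right hcomb (le_of_lt (mul_pos hMd hMn))
        calc r ^ n * r ^ d * M ^ n
            = r ^ n * (r ^ d / M ^ d) * (M ^ d * M ^ n) := by field_simp
        _ ≤ K0 * (r ^ n / M ^ n) * r ^ d * (M ^ d * M ^ n) := this
        _ = K0 * r ^ n * r ^ d * M ^ d := by field_simp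
      have h2 : (r ^ n * r ^ d) * M ^ n ≤ (r ^ n * r ^ d) * (K0 * M ^ d) := by
        calc (r ^ n * r ^ d) * M ^ n = r ^ n * r ^ d * M ^ n := by ring
        _ ≤ K0 * r ^ n * r ^ d * M ^ d := h1
        _ = (r ^ n * r ^ d) * (K0 * M ^ d) := by ring
      exact le_of_mul_le_mul_left h2 (mul_pos hrn hrd)
    -- but M^n ≥ M^(d+1) > K0 * M^d
    have hMpow : M * M ^ d ≤ M ^ n := by
      have h1 : M ^ (d + 1) ≤ M ^ (n : ℝ) :=
        Real.rpow_le_rpow_of_exponent_le hM1.le (by linarith)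
      rw [Real.rpow_natCast] at h1
      rw [Real.rpow_add hM0, Real.rpow_one] at h1
      linarith [h1]
    have : M * M ^ d ≤ K0 * M ^ d := le_trans hMpow hMle
    have hMK : M ≤ K0 := le_of_mul_le_mul_right (by linarith [this]) hMd
    linarith
  -- assemble the final statement with C = M
  refine ⟨M, hM0, ?_⟩
  intro x hx r hr
  obtain ⟨A, hAx, hAd⟩ := key x hx r hr
  have hpos : 0 < r / M := div_pos hr hM0
  have hAnot : A ∉ Γ := by
    intro hA
    have : infDist A Γ = 0 := infDist_zero_of_mem hA
    rw [this] at hAd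
    linarith
  refine ⟨A, hAnot, ?_, ?_, ?_⟩
  · rw [inv_mul_eq_div]; exact hAd
  · rw [← dist_eq_norm]
    exact infDist_le_dist_of_mem hx
  · rw [← dist_eq_norm]
    nlinarith [dist_nonneg (x := A) (y := x)]
end
end

section
/- For β > 0 and d ≥ 1, let c_β = ∫_{ℝ^d} (1+|y|²)^{−(d+β)/2} dy. Then the recursion (β+d) c_{β+2} = β c_β holds for all β > 0. -/
open MeasureTheory Metric Set

noncomputable section

-- integrability of the radial integrand
lemma radial_integrable (d : ℕ) (hd : 1 ≤ d) (γ : ℝ) (hγ : 0 < γ) :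
    IntegrableOn (fun r : ℝ => r ^ (d - 1) * (1 + r ^ 2) ^ (-((d : ℝ) + γ) / 2)) (Ioi 0) := by
  have hcont : Continuous (fun r : ℝ => r ^ (d - 1) * (1 + r ^ 2) ^ (-((d : ℝ) + γ) / 2)) := by
    apply (continuous_pow _).mul
    apply Continuous.rpow_const (by continuity)
    intro r
    left
    positivity
  have h1 : Ioc (0:ℝ) 1 ∪ Ioi 1 = Ioi 0 := Ioc_union_Ioi_eq_Ioi zero_le_one
  rw [← h1]
  apply IntegrableOn.union
  · exact (hcont.integrableOn_Icc).mono_set Ioc_subset_Icc_self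
  · have hint : IntegrableOn (fun r : ℝ => r ^ (-1 - γ)) (Ioi 1) :=
      integrableOn_Ioi_rpow_of_lt (by linarith) zero_lt_one
    apply Integrable.mono hint hcont.aestronglyMeasurable.restrict
    filter_upwards [ae_restrict_mem measurableSet_Ioi] with r hr
    have hr1 : (1:ℝ) ≤ r := le_of_lt hr
    have hr0 : (0:ℝ) < r := lt_of_lt_of_le zero_lt_one hr1
    have hb : (1 + r ^ 2) ^ (-((d : ℝ) + γ) / 2) ≤ (r ^ 2 : ℝ) ^ (-((d : ℝ) + γ) / 2) := by
      apply Real.rpow_le_rpow_of_nonpos (by positivity) (by nlinarith)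
      have : (0:ℝ) < (d:ℝ) + γ := by positivity
      linarith
    have heq : (r ^ 2 : ℝ) ^ (-((d : ℝ) + γ) / 2) = r ^ (-((d:ℝ) + γ)) := by
      rw [← Real.rpow_natCast r 2, ← Real.rpow_mul hr0.le]
      norm_num
      ring_nf
    have hpow : (r : ℝ) ^ (d - 1) = r ^ ((d:ℝ) - 1) := by
      rw [← Real.rpow_natCast r (d-1), Nat.cast_sub hd, Nat.cast_one]
    rw [Real.norm_eq_abs, Real.norm_eq_abs, abs_of_nonneg (by positivity),
      abs_of_nonneg (by positivity)]
    calc r ^ (d - 1) * (1 + r ^ 2) ^ (-((d : ℝ) + γ) / 2)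
        ≤ r ^ (d - 1) * (r ^ 2 : ℝ) ^ (-((d : ℝ) + γ) / 2) := by
          apply mul_le_mul_of_nonneg_left hb (by positivity)
      _ = r ^ (-1 - γ) := by
          rw [heq, hpow, ← Real.rpow_add hr0]; ring_nf

-- key 1D identity
lemma radial_identity (d : ℕ) (hd : 1 ≤ d) (β : ℝ) (hβ : 0 < β) :
    (β + d) * ∫ r in Ioi (0:ℝ), r ^ (d - 1) * (1 + r ^ 2) ^ (-((d : ℝ) + (β + 2)) / 2)
      = β * ∫ r in Ioi (0:ℝ), r ^ (d - 1) * (1 + r ^ 2) ^ (-((d : ℝ) + β) / 2) := by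
  set a : ℝ := ((d : ℝ) + β) / 2 with ha
  have ha0 : 0 < a := by positivity
  set g : ℝ → ℝ := fun r => r ^ d * (1 + r ^ 2) ^ (-a) with hg
  set h : ℝ → ℝ := fun r =>
      -β * (r ^ (d - 1) * (1 + r ^ 2) ^ (-((d : ℝ) + β) / 2))
      + ((d:ℝ) + β) * (r ^ (d - 1) * (1 + r ^ 2) ^ (-((d : ℝ) + (β + 2)) / 2)) with hh
  have hA : ∀ r : ℝ, (0:ℝ) < 1 + r ^ 2 := fun r => by positivity
  have hderiv : ∀ r ∈ Ici (0:ℝ), HasDerivAt g (h r) r := by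
    intro r hr
    have h1 : HasDerivAt (fun r : ℝ => 1 + r ^ 2) (2 * r) r := by
      simpa using ((hasDerivAt_pow 2 r).const_add 1)
    have h2 : HasDerivAt (fun r : ℝ => (1 + r ^ 2) ^ (-a)) (2 * r * (-a) * (1 + r ^ 2) ^ (-a - 1)) r :=
      h1.rpow_const (Or.inl (hA r).ne')
    have h3 : HasDerivAt g _ r := (hasDerivAt_pow d r).mul h2
    convert h3 using 1
    have hmem : (0:ℝ) ≤ r := hr
    have hrd : (r:ℝ) ^ d * r = r ^ (d - 1) * r ^ 2 := by
      rw [← pow_succ, ← pow_add]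
      congr 1
      omega
    have hm1 : (1 + r ^ 2) ^ (-a - 1) * (1 + r ^ 2) = (1 + r ^ 2) ^ (-a) := by
      rw [← Real.rpow_add_one (hA r).ne']
      ring_nf
    have he1 : (1 + r ^ 2) ^ (-((d : ℝ) + β) / 2) = (1 + r ^ 2) ^ (-a) := by rw [ha]; ring_nf
    have he2 : (1 + r ^ 2) ^ (-((d : ℝ) + (β + 2)) / 2) = (1 + r ^ 2) ^ (-a - 1) := by
      rw [ha]; congr 1; ring
    simp only [hh]
    rw [he1, he2]
    have key : r ^ d * (2 * r * (-a) * (1 + r ^ 2) ^ (-a - 1))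
        = -(2 * a) * (r ^ (d-1) * ((1 + r ^ 2) ^ (-a) - (1 + r ^ 2) ^ (-a - 1))) := by
      have : r ^ d * r * (1 + r^2) ^ (-a-1) = r ^ (d-1) * (r^2 * (1 + r^2)^(-a-1)) := by
        rw [hrd]; ring
      have h4 : r ^ 2 * (1 + r^2)^(-a-1) = (1 + r^2) ^ (-a) - (1 + r^2)^(-a-1) := by
        have : r ^ 2 * (1 + r^2)^(-a-1) = (1 + r^2) * (1 + r^2)^(-a-1) - (1 + r^2)^(-a-1) := by ring
        rw [this, mul_comm, hm1]
      calc r ^ d * (2 * r * (-a) * (1 + r ^ 2) ^ (-a - 1))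
          = -(2*a) * (r ^ d * r * (1 + r^2) ^ (-a-1)) := by ring
        _ = -(2*a) * (r ^ (d-1) * ((1 + r ^ 2) ^ (-a) - (1 + r ^ 2) ^ (-a - 1))) := by
            rw [this, h4]
    rw [key]
    have h2a : 2 * a = (d:ℝ) + β := by rw [ha]; ring
    have hd' : (↑d : ℝ) * r ^ (d-1) = (d:ℝ) * r ^ (d-1) := rfl
    rw [h2a]
    have : (↑d : ℝ) * r ^ (d - 1) * (1 + r ^ 2) ^ (-a) = (d:ℝ) * (r ^ (d-1) * (1 + r ^ 2) ^ (-a)) := by ring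
    ring
  have hint1 := radial_integrable d hd β hβ
  have hint2 := radial_integrable d hd (β + 2) (by linarith)
  have hinth : IntegrableOn h (Ioi 0) := by
    rw [hh]
    exact ((hint1.const_mul (-β)).add (hint2.const_mul ((d:ℝ) + β)))
  have hlim : Filter.Tendsto g Filter.atTop (nhds 0) := by
    have hb : ∀ᶠ r in Filter.atTop, g r ≤ r ^ (-β) := by
      filter_upwards [Filter.eventually_ge_atTop (1:ℝ)] with r hr1
      have hr0 : (0:ℝ) < r := lt_of_lt_of_le zero_lt_one hr1
      have hb1 : (1 + r ^ 2) ^ (-a) ≤ (r ^ 2 : ℝ) ^ (-a) :=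
        Real.rpow_le_rpow_of_nonpos (by positivity) (by nlinarith) (by linarith)
      have heq : (r ^ 2 : ℝ) ^ (-a) = r ^ (-(2*a)) := by
        rw [← Real.rpow_natCast r 2, ← Real.rpow_mul hr0.le]
        norm_num
      have hpowd : (r:ℝ) ^ d = r ^ (d:ℝ) := (Real.rpow_natCast r d).symm
      calc g r ≤ r ^ d * (r ^ 2 : ℝ) ^ (-a) := by
            exact mul_le_mul_of_nonneg_left hb1 (by positivity)
        _ = r ^ (-β) := by
            rw [heq, hpowd, ← Real.rpow_add hr0]
            congr 1
            rw [ha]; ring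
    have hb0 : ∀ᶠ r in Filter.atTop, 0 ≤ g r := by
      filter_upwards [Filter.eventually_ge_atTop (0:ℝ)] with r hr
      rw [hg]; positivity
    have htop : Filter.Tendsto (fun r : ℝ => r ^ (-β)) Filter.atTop (nhds 0) :=
      tendsto_rpow_neg_atTop hβ
    exact squeeze_zero' hb0 hb htop
  have hftc := integral_Ioi_of_hasDerivAt_of_tendsto' hderiv hinth hlim
  have hg0 : g 0 = 0 := by
    rw [hg]
    simp [zero_pow (by omega : d ≠ 0)]
  rw [hg0, sub_zero] at hftc
  rw [hh] at hftc
  rw [integral_add (hint1.const_mul (-β)) (hint2.const_mul ((d:ℝ) + β))] at hftc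
  rw [integral_const_mul, integral_const_mul] at hftc
  have := hftc
  linarith [this]

/-- The constant `c_β = ∫_{ℝ^d} (1+|y|²)^{−(d+β)/2} dy`. -/
def cConst (d : ℕ) (β : ℝ) : ℝ :=
  ∫ y : EuclideanSpace ℝ (Fin d), (1 + ‖y‖ ^ 2) ^ (-((d : ℝ) + β) / 2)

lemma cConst_eq (d : ℕ) (hd : 1 ≤ d) (γ : ℝ) :
    cConst d γ = d * (volume (ball (0 : EuclideanSpace ℝ (Fin d)) 1)).toReal *
      ∫ r in Ioi (0:ℝ), r ^ (d - 1) * (1 + r ^ 2) ^ (-((d : ℝ) + γ) / 2) := by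
  haveI : Nonempty (Fin d) := ⟨⟨0, hd⟩⟩
  haveI : Nontrivial (EuclideanSpace ℝ (Fin d)) := by
    infer_instance
  have h := MeasureTheory.integral_fun_norm_addHaar (volume : Measure (EuclideanSpace ℝ (Fin d)))
    (fun t : ℝ => (1 + t ^ 2) ^ (-((d : ℝ) + γ) / 2))
  rw [cConst]
  rw [h]
  rw [finrank_euclideanSpace_fin]
  rw [nsmul_eq_mul, smul_eq_mul]
  simp only [nsmul_eq_mul, smul_eq_mul, measureReal_def]
  ring

/-- The recursion `(β+d) c_{β+2} = β c_β` holds for all `β > 0`. -/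
theorem stmt5 (d : ℕ) (hd : 1 ≤ d) (β : ℝ) (hβ : 0 < β) :
    (β + d) * cConst d (β + 2) = β * cConst d β := by
  rw [cConst_eq d hd, cConst_eq d hd]
  have := radial_identity d hd β hβ
  set I1 := ∫ r in Ioi (0:ℝ), r ^ (d - 1) * (1 + r ^ 2) ^ (-((d : ℝ) + (β + 2)) / 2)
  set I2 := ∫ r in Ioi (0:ℝ), r ^ (d - 1) * (1 + r ^ 2) ^ (-((d : ℝ) + β) / 2)
  linear_combination (↑d * (volume (ball (0 : EuclideanSpace ℝ (Fin d)) 1)).toReal) * this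
end
end

section
/- Let Γ ⊂ ℝⁿ be closed nonempty, B a ball centered on Γ, and E₁ = {X ∈ 2B : 10 dist(X,Γ) ≤ dist(X,B) ≤ 20 dist(X,Γ)}. Then for every z ∈ Γ, with the cone γ(z) = {X : |X−z| ≤ 2 dist(X,Γ)}, one has ∫_{γ(z)} 1_{E₁}(X) dist(X,Γ)^{−n} dX ≤ C for a dimensional constant C. In particular, along the proof one shows: for X ∈ γ(z) ∩ E₁, (1/24) dist(z,B) ≤ dist(X,Γ) ≤ (1/8) dist(z,B) and |X−z| ≤ (1/4) dist(z,B). -/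
open MeasureTheory Metric Set

noncomputable section

/-- Let `Γ ⊂ ℝⁿ` be closed nonempty, `B = B̄(x,r)` a ball centered on
`Γ`, and `E₁ = {X ∈ 2B : 10 dist(X,Γ) ≤ dist(X,B) ≤ 20 dist(X,Γ)}`. Then for every
`z ∈ Γ`, with the cone `γ(z) = {X : |X−z| ≤ 2 dist(X,Γ)}`,
`∫_{γ(z)} 1_{E₁}(X) dist(X,Γ)^{−n} dX ≤ C` for a dimensional constant `C`; moreover for
`X ∈ γ(z) ∩ E₁` one has `(1/24) dist(z,B) ≤ dist(X,Γ) ≤ (1/8) dist(z,B)` and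
`|X−z| ≤ (1/4) dist(z,B)`. -/
theorem stmt9 (n : ℕ) (hn : 0 < n) :
    ∃ C > 0, ∀ (Γ : Set (EuclideanSpace ℝ (Fin n))), IsClosed Γ → Γ.Nonempty →
      ∀ x ∈ Γ, ∀ r > 0, ∀ z ∈ Γ,
      (∫ X in {X | X ∉ Γ ∧ ‖X - z‖ ≤ 2 * infDist X Γ} ∩
          {X ∈ ball x (2 * r) |
            10 * infDist X Γ ≤ infDist X (closedBall x r) ∧
            infDist X (closedBall x r) ≤ 20 * infDist X Γ},
        (infDist X Γ) ^ (-(n : ℝ)) ≤ C) ∧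
      ∀ X, X ∉ Γ → ‖X - z‖ ≤ 2 * infDist X Γ → X ∈ ball x (2 * r) →
        10 * infDist X Γ ≤ infDist X (closedBall x r) →
        infDist X (closedBall x r) ≤ 20 * infDist X Γ →
        (1 / 24) * infDist z (closedBall x r) ≤ infDist X Γ ∧
        infDist X Γ ≤ (1 / 8) * infDist z (closedBall x r) ∧
        ‖X - z‖ ≤ (1 / 4) * infDist z (closedBall x r) := by
  classical
  set v : ℝ := (volume (ball (0 : EuclideanSpace ℝ (Fin n)) 1)).toReal with hv
  have hv0 : 0 ≤ v := ENNReal.toReal_nonneg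
  refine ⟨6 ^ n * v + 1, by positivity, ?_⟩
  intro Γ hΓc hΓne x hx r hr z hz
  set ρ : ℝ := infDist z (closedBall x r) with hρdef
  have hρ0 : 0 ≤ ρ := infDist_nonneg
  have key : ∀ X : EuclideanSpace ℝ (Fin n), X ∉ Γ → ‖X - z‖ ≤ 2 * infDist X Γ →
      X ∈ ball x (2 * r) → 10 * infDist X Γ ≤ infDist X (closedBall x r) →
      infDist X (closedBall x r) ≤ 20 * infDist X Γ →
      (1 / 24) * ρ ≤ infDist X Γ ∧
      infDist X Γ ≤ (1 / 8) * ρ ∧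
      ‖X - z‖ ≤ (1 / 4) * ρ := by
    intro X hX h1 _ h2 h3
    have hd0 : 0 ≤ infDist X Γ := infDist_nonneg
    have hXz : dist X z = ‖X - z‖ := dist_eq_norm X z
    have hA : ρ ≤ infDist X (closedBall x r) + dist z X := infDist_le_infDist_add_dist
    have hB : infDist X (closedBall x r) ≤ ρ + dist X z := infDist_le_infDist_add_dist
    rw [dist_comm, hXz] at hA
    rw [hXz] at hB
    refine ⟨by linarith, by linarith, by linarith⟩
  refine ⟨?_, key⟩
  set s : Set (EuclideanSpace ℝ (Fin n)) :=
    {X | X ∉ Γ ∧ ‖X - z‖ ≤ 2 * infDist X Γ} ∩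
      {X ∈ ball x (2 * r) |
        10 * infDist X Γ ≤ infDist X (closedBall x r) ∧
        infDist X (closedBall x r) ≤ 20 * infDist X Γ} with hs
  have hmem : ∀ X ∈ s, (1 / 24) * ρ ≤ infDist X Γ ∧ infDist X Γ ≤ (1 / 8) * ρ ∧
      ‖X - z‖ ≤ (1 / 4) * ρ ∧ 0 < infDist X Γ := by
    intro X hX
    obtain ⟨⟨hX1, hX2⟩, hX3, hX4, hX5⟩ := hX
    have hpos : 0 < infDist X Γ := ((hΓc.notMem_iff_infDist_pos hΓne).mp hX1)
    obtain ⟨a, b, c⟩ := key X hX1 hX2 hX3 hX4 hX5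
    exact ⟨a, b, c, hpos⟩
  rcases eq_or_lt_of_le hρ0 with hρz | hρpos
  · -- ρ = 0 : the set is empty
    have : s = ∅ := by
      ext X
      simp only [mem_empty_iff_false, iff_false]
      intro hX
      obtain ⟨-, hb, -, hpos⟩ := hmem X hX
      rw [← hρz] at hb
      simp at hb
      linarith
    rw [this]
    simp
    positivity
  · -- ρ > 0
    have hsub : s ⊆ closedBall z (ρ / 4) := by
      intro X hX
      obtain ⟨-, -, hc, -⟩ := hmem X hX
      rw [mem_closedBall, dist_eq_norm]
      linarith
    have md : Measurable fun X : EuclideanSpace ℝ (Fin n) => infDist X Γ :=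
      (continuous_infDist_pt Γ).measurable
    have mD : Measurable fun X : EuclideanSpace ℝ (Fin n) => infDist X (closedBall x r) :=
      (continuous_infDist_pt (closedBall x r)).measurable
    have mz : Measurable fun X : EuclideanSpace ℝ (Fin n) => ‖X - z‖ :=
      ((continuous_id.sub continuous_const).norm).measurable
    have hseq : s = (Γᶜ ∩ {X | ‖X - z‖ ≤ 2 * infDist X Γ}) ∩
        (ball x (2 * r) ∩ ({X | 10 * infDist X Γ ≤ infDist X (closedBall x r)} ∩
          {X | infDist X (closedBall x r) ≤ 20 * infDist X Γ})) := by
      ext X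
      simp only [hs, mem_inter_iff, mem_setOf_eq, mem_compl_iff]
    have hms : MeasurableSet s := by
      rw [hseq]
      exact ((hΓc.measurableSet.compl).inter
          (measurableSet_le mz (measurable_const.mul md))).inter
        (measurableSet_ball.inter
          ((measurableSet_le (measurable_const.mul md) mD).inter
            (measurableSet_le mD (measurable_const.mul md))))
    have hsfin : volume s < ⊤ :=
      lt_of_le_of_lt (measure_mono hsub) measure_closedBall_lt_top
    have hbound : ∀ X ∈ s, ‖(infDist X Γ) ^ (-(n : ℝ))‖ ≤ (24 / ρ) ^ n := by
      intro X hX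
      obtain ⟨ha, -, -, hpos⟩ := hmem X hX
      have h24 : ρ / 24 ≤ infDist X Γ := by linarith
      have hq : 0 < ρ / 24 := by linarith
      rw [Real.rpow_neg hpos.le, Real.rpow_natCast, Real.norm_eq_abs,
        abs_of_nonneg (by positivity)]
      have h1 : (ρ / 24) ^ n ≤ (infDist X Γ) ^ n := pow_le_pow_left₀ hq.le h24 n
      have h2 : ((infDist X Γ) ^ n)⁻¹ ≤ ((ρ / 24) ^ n)⁻¹ :=
        inv_anti₀ (by positivity) h1
      calc ((infDist X Γ) ^ n)⁻¹ ≤ ((ρ / 24) ^ n)⁻¹ := h2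
        _ = (24 / ρ) ^ n := by rw [← inv_pow, inv_div]
    have hnorm := norm_setIntegral_le_of_norm_le_const hsfin hbound
    have hmtoReal : (volume s).toReal ≤ (ρ / 4) ^ n * v := by
      have h1 : (volume s).toReal ≤ (volume (closedBall z (ρ / 4))).toReal :=
        ENNReal.toReal_mono measure_closedBall_lt_top.ne (measure_mono hsub)
      have h2 : volume (closedBall z (ρ / 4)) =
          ENNReal.ofReal ((ρ / 4) ^ Module.finrank ℝ (EuclideanSpace ℝ (Fin n))) *
            volume (ball (0 : EuclideanSpace ℝ (Fin n)) 1) :=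
        Measure.addHaar_closedBall volume z (by positivity)
      rw [h2, finrank_euclideanSpace_fin, ENNReal.toReal_mul,
        ENNReal.toReal_ofReal (by positivity)] at h1
      exact h1
    have hfinal : (24 / ρ) ^ n * (volume s).toReal ≤ 6 ^ n * v := by
      calc (24 / ρ) ^ n * (volume s).toReal ≤ (24 / ρ) ^ n * ((ρ / 4) ^ n * v) := by
            apply mul_le_mul_of_nonneg_left hmtoReal (by positivity)
        _ = ((24 / ρ) * (ρ / 4)) ^ n * v := by rw [mul_pow, mul_assoc]
        _ = 6 ^ n * v := by
            congr 2
            field_simp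
            ring
    calc (∫ X in s, (infDist X Γ) ^ (-(n : ℝ))) ≤
          ‖∫ X in s, (infDist X Γ) ^ (-(n : ℝ))‖ := le_abs_self _
      _ ≤ (24 / ρ) ^ n * (volume s).toReal := hnorm
      _ ≤ 6 ^ n * v := hfinal
      _ ≤ 6 ^ n * v + 1 := by linarith
end
end
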